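/- (Splitting of the Padua-like Vandermonde determinant) Let n be even, let x1, ..., x_{n+1} and y1, ..., y_{n+2} be distinct points, and let A_n = A_n^o ∪ A_n^e be the Padua-like points, where A_n^o = {(x_{2i+1}, y_{2j+1}) : 0 ≤ i, j ≤ n/2} and A_n^e = {(x_{2i}, y_{2j}) : 1 ≤ i ≤ n/2, 1 ≤ j ≤ n/2+1}. Let T_{n/2} = {x^α y^β : 0 ≤ α, β ≤ n/2} and T^e_{n/2} = a(x)·B_{n/2−1} ∪ b(y)·B_{n/2−1}, where a(x) = ∏_{i=0}^{n/2}(x − x_{2i+1}), b(y) = ∏_{j=0}^{n/2}(y − y_{2j+1}), and B_k is the set of monomials of total degree ≤ k. Then vdm(A_n, T_{n/2} ∪ T^e_{n/2}) = ± vdm(A_n^o, T_{n/2}) · vdm(A_n^e, T^e_{n/2}). -/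

import Mathlib

/-- a(u) = ∏_{i=0}^{m} (u − x_{2i+1}), the annihilating polynomial of the odd-indexed
points (as a real function); the points x are 1-indexed via x : ℕ → ℝ. -/
def annih (m : ℕ) (x : ℕ → ℝ) (u : ℝ) : ℝ :=
  ∏ i ∈ Finset.range (m + 1), (u - x (2 * i + 1))

/-- Index type for T^e_{m} = a(x)·B_{m−1} ∪ b(y)·B_{m−1}: a tag (true for the a-copy,
false for the b-copy) and a monomial exponent pair (α, β) with α + β ≤ m − 1. -/
def TeIdx (m : ℕ) := Bool × {pq : ℕ × ℕ // pq.1 + pq.2 + 1 ≤ m}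

/-- The element of T^e_{m} with index c, as a function of (u, v):
a(u)·u^α·v^β or b(v)·u^α·v^β. -/
def TePoly (m : ℕ) (x y : ℕ → ℝ) (c : TeIdx m) (u v : ℝ) : ℝ :=
  (if c.1 then annih m x u else annih m y v) * u ^ c.2.1.1 * v ^ c.2.1.2

/-- splitting of the Padua-like Vandermonde determinant: with n = 2m even,
distinct x's and y's, A_n^o = {(x_{2i+1}, y_{2j+1})}, A_n^e = {(x_{2i}, y_{2j})},
T_m the square monomials and T^e_m as above (enumerated by a bijection e),
vdm(A_n, T_m ∪ T^e_m) = ± vdm(A_n^o, T_m) · vdm(A_n^e, T^e_m). -/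
theorem stmt11 (m : ℕ) (x y : ℕ → ℝ)
    (hx : Set.InjOn x (Set.Icc 1 (2 * m + 1)))
    (hy : Set.InjOn y (Set.Icc 1 (2 * m + 2)))
    (e : Fin m × Fin (m + 1) ≃ TeIdx m) :
    ∃ ε : ℝ, (ε = 1 ∨ ε = -1) ∧
      Matrix.det (Matrix.of
        fun (r c : (Fin (m + 1) × Fin (m + 1)) ⊕ (Fin m × Fin (m + 1))) =>
          Sum.elim
            (fun (ab : Fin (m + 1) × Fin (m + 1)) (u v : ℝ) =>
              u ^ (ab.1 : ℕ) * v ^ (ab.2 : ℕ))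
            (fun kl => TePoly m x y (e kl)) c
            (Sum.elim (fun ij => x (2 * (ij.1 : ℕ) + 1))
              (fun ij => x (2 * (ij.1 : ℕ) + 2)) r)
            (Sum.elim (fun ij => y (2 * (ij.2 : ℕ) + 1))
              (fun ij => y (2 * (ij.2 : ℕ) + 2)) r)) =
      ε * Matrix.det (Matrix.of fun (r c : Fin (m + 1) × Fin (m + 1)) =>
              (x (2 * (r.1 : ℕ) + 1)) ^ (c.1 : ℕ) * (y (2 * (r.2 : ℕ) + 1)) ^ (c.2 : ℕ)) *
          Matrix.det (Matrix.of fun (r c : Fin m × Fin (m + 1)) =>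
              TePoly m x y (e c) (x (2 * (r.1 : ℕ) + 2)) (y (2 * (r.2 : ℕ) + 2))) := by

  refine ⟨1, Or.inl rfl, ?_⟩
  rw [one_mul]
  have hzero : ∀ (ij : Fin (m + 1) × Fin (m + 1)) (kl : Fin m × Fin (m + 1)),
      TePoly m x y (e kl) (x (2 * (ij.1 : ℕ) + 1)) (y (2 * (ij.2 : ℕ) + 1)) = 0 := by
    intro ij kl
    unfold TePoly
    rcases (e kl).1 with _ | _ <;> simp only [if_true, if_false, Bool.false_eq_true]
    · have : annih m y (y (2 * (ij.2 : ℕ) + 1)) = 0 := by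
        unfold annih
        exact Finset.prod_eq_zero (Finset.mem_range.2 ij.2.isLt) (by ring)
      rw [this]; ring
    · have : annih m x (x (2 * (ij.1 : ℕ) + 1)) = 0 := by
        unfold annih
        exact Finset.prod_eq_zero (Finset.mem_range.2 ij.1.isLt) (by ring)
      rw [this]; ring
  have heq : (Matrix.of
        fun (r c : (Fin (m + 1) × Fin (m + 1)) ⊕ (Fin m × Fin (m + 1))) =>
          Sum.elim
            (fun (ab : Fin (m + 1) × Fin (m + 1)) (u v : ℝ) =>
              u ^ (ab.1 : ℕ) * v ^ (ab.2 : ℕ))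
            (fun kl => TePoly m x y (e kl)) c
            (Sum.elim (fun ij => x (2 * (ij.1 : ℕ) + 1))
              (fun ij => x (2 * (ij.1 : ℕ) + 2)) r)
            (Sum.elim (fun ij => y (2 * (ij.2 : ℕ) + 1))
              (fun ij => y (2 * (ij.2 : ℕ) + 2)) r)) =
      Matrix.fromBlocks
        (Matrix.of fun (r c : Fin (m + 1) × Fin (m + 1)) =>
          (x (2 * (r.1 : ℕ) + 1)) ^ (c.1 : ℕ) * (y (2 * (r.2 : ℕ) + 1)) ^ (c.2 : ℕ))
        0
        (Matrix.of fun (r : Fin m × Fin (m + 1)) (c : Fin (m + 1) × Fin (m + 1)) =>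
          (x (2 * (r.1 : ℕ) + 2)) ^ (c.1 : ℕ) * (y (2 * (r.2 : ℕ) + 2)) ^ (c.2 : ℕ))
        (Matrix.of fun (r c : Fin m × Fin (m + 1)) =>
          TePoly m x y (e c) (x (2 * (r.1 : ℕ) + 2)) (y (2 * (r.2 : ℕ) + 2))) := by
    ext r c
    rcases r with ij | ij <;> rcases c with ab | kl <;>
      simp [Matrix.fromBlocks, hzero]
  rw [heq, Matrix.det_fromBlocks_zero₁₂]
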